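/- For a bounded operator A : X → Y, the modulus ρ(·, A) is convex on [0, ∞), and consequently lim_{σ→0⁺} ρ(σ, A)/σ = inf_{σ>0} ρ(σ, A)/σ. -/

import Mathlib

open Filter
open scoped Classical

/-- A net in `X`: a function to `X` from a nonempty directed preorder. -/
structure Net (X : Type*) where
  ι : Type
  pre : Preorder ι
  dir : IsDirected ι fun a b => pre.le a b
  ne : Nonempty ι
  toFun : ι → X

/-- The `atTop` filter of the index set of a net, along which limits are taken. -/
def Net.F {X : Type*} (N : Net X) : Filter N.ι := @Filter.atTop _ N.pre

variable {X Y : Type*} [NormedAddCommGroup X] [NormedSpace ℝ X]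
  [NormedAddCommGroup Y] [NormedSpace ℝ Y]

/-- A net in a normed space is weakly null if it converges to `0` in the weak topology,
i.e. `f (x_λ) → 0` for every continuous linear functional `f`. -/
def WeaklyNullNet (N : Net X) : Prop :=
  ∀ f : X →L[ℝ] ℝ, Tendsto (fun i => f (N.toFun i)) N.F (nhds 0)

/-- The net takes values in the ball of radius `σ`. -/
def NetInBall (N : Net X) (σ : ℝ) : Prop := ∀ i, ‖N.toFun i‖ ≤ σ

/-- The modulus of asymptotic uniform smoothness of an operator `A : X → Y`:
`ρ(σ, A) = sup { limsup_λ ‖y + A x_λ‖ - 1 }` over `y ∈ B_Y` and weakly null nets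
`(x_λ) ⊆ σ B_X`, with `ρ(σ, A) = 0` for the zero operator. -/
noncomputable def rho (A : X →L[ℝ] Y) (σ : ℝ) : ℝ :=
  if A = 0 then 0 else
    sSup {r : ℝ | ∃ (N : Net X) (y : Y), ‖y‖ ≤ 1 ∧ NetInBall N σ ∧ WeaklyNullNet N ∧
      r = Filter.limsup (fun i => ‖y + A (N.toFun i)‖) N.F - 1}

/- ### Auxiliary material -/

lemma Net.neBot {X : Type*} (N : Net X) : N.F.NeBot := by
  letI := N.pre
  have h : N.F = atTop := rfl
  rw [h, atTop_neBot_iff]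
  exact ⟨N.ne, N.dir⟩

/-- The constant net at a point. -/
def constNet (x : X) : Net X :=
  ⟨Unit, inferInstance, ⟨fun a b => ⟨b, le_of_eq (Subsingleton.elim a b), le_refl b⟩⟩,
    ⟨()⟩, fun _ => x⟩

/-- The set of which `rho` is the supremum. -/
def rhoSet (A : X →L[ℝ] Y) (σ : ℝ) : Set ℝ :=
  {r : ℝ | ∃ (N : Net X) (y : Y), ‖y‖ ≤ 1 ∧ NetInBall N σ ∧ WeaklyNullNet N ∧
      r = Filter.limsup (fun i => ‖y + A (N.toFun i)‖) N.F - 1}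

lemma rho_eq (A : X →L[ℝ] Y) (hA : A ≠ 0) (σ : ℝ) : rho A σ = sSup (rhoSet A σ) := by
  simp [rho, hA, rhoSet]

lemma constNet_mem (A : X →L[ℝ] Y) {σ : ℝ} (hσ : 0 ≤ σ) {y : Y} (hy : ‖y‖ ≤ 1) :
    ‖y‖ - 1 ∈ rhoSet A σ := by
  refine ⟨constNet 0, y, hy, fun i => by simpa [constNet] using hσ, fun f => by
    simpa [constNet] using tendsto_const_nhds, ?_⟩
  haveI := (constNet (0 : X)).neBot
  simp [constNet, Net.F, Filter.limsup_const]
  exact (Filter.limsup_const (f := (constNet (0 : X)).F) ‖y‖).symm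

lemma rhoSet_nonempty (A : X →L[ℝ] Y) {σ : ℝ} (hσ : 0 ≤ σ) : (rhoSet A σ).Nonempty :=
  ⟨‖(0 : Y)‖ - 1, constNet_mem A hσ (by simp)⟩

lemma mem_le_bound (A : X →L[ℝ] Y) {σ r : ℝ} (hr : r ∈ rhoSet A σ) : r ≤ ‖A‖ * σ := by
  obtain ⟨N, y, hy, hball, hwn, rfl⟩ := hr
  haveI := N.neBot
  have hle : ∀ i, ‖y + A (N.toFun i)‖ ≤ 1 + ‖A‖ * σ := fun i =>
    (norm_add_le _ _).trans (add_le_add hy ((A.le_opNorm _).trans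
      (mul_le_mul_of_nonneg_left (hball i) (norm_nonneg A))))
  have hb : Filter.IsBoundedUnder (· ≥ ·) N.F (fun i => ‖y + A (N.toFun i)‖) :=
    Filter.isBoundedUnder_of ⟨0, fun i => norm_nonneg _⟩
  have := Filter.limsup_le_of_le hb.isCoboundedUnder_le (Eventually.of_forall hle)
  linarith

lemma rhoSet_bddAbove (A : X →L[ℝ] Y) (σ : ℝ) : BddAbove (rhoSet A σ) :=
  ⟨‖A‖ * σ, fun _ hr => mem_le_bound A hr⟩

lemma rho_nonneg (A : X →L[ℝ] Y) {σ : ℝ} (hσ : 0 ≤ σ) : 0 ≤ rho A σ := by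
  by_cases hA : A = 0
  · simp [rho, hA]
  · rw [rho_eq A hA]
    obtain ⟨x, hx⟩ : ∃ x, A x ≠ 0 := by
      by_contra h
      push_neg at h
      exact hA (ContinuousLinearMap.ext fun x => h x)
    set y : Y := ‖A x‖⁻¹ • A x with hy
    have hny : ‖y‖ = 1 := by
      rw [hy, norm_smul, norm_inv, norm_norm, inv_mul_cancel₀ (norm_ne_zero_iff.2 hx)]
    have := constNet_mem A hσ (le_of_eq hny)
    rw [hny] at this
    simpa using le_csSup (rhoSet_bddAbove A σ) this

lemma rho_zero (A : X →L[ℝ] Y) : rho A 0 = 0 := by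
  by_cases hA : A = 0
  · simp [rho, hA]
  · rw [rho_eq A hA]
    refine le_antisymm (csSup_le (rhoSet_nonempty A le_rfl) ?_) ?_
    · rintro r ⟨N, y, hy, hball, hwn, rfl⟩
      haveI := N.neBot
      have hzero : ∀ i, N.toFun i = 0 := fun i => norm_le_zero_iff.1 (hball i)
      have : (fun i => ‖y + A (N.toFun i)‖) = fun _ => ‖y‖ := by
        funext i; rw [hzero i]; simp
      rw [this, Filter.limsup_const]
      linarith
    · rw [← rho_eq A hA]; exact rho_nonneg A le_rfl

/-- The rescaled net. -/
def Net.smul {X : Type*} [NormedAddCommGroup X] [NormedSpace ℝ X] (c : ℝ) (N : Net X) :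
    Net X := ⟨N.ι, N.pre, N.dir, N.ne, fun i => c • N.toFun i⟩

lemma Net.smul_F {X : Type*} [NormedAddCommGroup X] [NormedSpace ℝ X] (c : ℝ) (N : Net X) :
    (N.smul c).F = N.F := rfl

lemma Net.smul_weaklyNull {N : Net X} (hwn : WeaklyNullNet N) (c : ℝ) :
    WeaklyNullNet (N.smul c) := by
  intro f
  have := (hwn f).const_mul c
  rw [mul_zero] at this
  show Tendsto (fun i => f (c • N.toFun i)) N.F (nhds 0)
  simpa [Net.smul, Net.smul_F, map_smul, smul_eq_mul] using this

theorem rho_convexOn (A : X →L[ℝ] Y) (hA : A ≠ 0) : ConvexOn ℝ (Set.Ici (0 : ℝ)) (rho A) := by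
  refine ⟨convex_Ici 0, ?_⟩
  intro σ1 h1 σ2 h2 a b ha hb hab
  simp only [smul_eq_mul]
  set σ := a * σ1 + b * σ2 with hσdef
  have hσ : 0 ≤ σ := add_nonneg (mul_nonneg ha h1) (mul_nonneg hb h2)
  rw [rho_eq A hA]
  refine csSup_le (rhoSet_nonempty A hσ) ?_
  rintro r ⟨N, y, hy, hball, hwn, rfl⟩
  haveI := N.neBot
  rcases eq_or_lt_of_le hσ with hσ0 | hσpos
  · -- σ = 0 : trivial case
    have hzero : ∀ i, N.toFun i = 0 := fun i =>
      norm_le_zero_iff.1 ((hball i).trans (le_of_eq hσ0.symm))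
    have : (fun i => ‖y + A (N.toFun i)‖) = fun _ => ‖y‖ := by
      funext i; rw [hzero i]; simp
    rw [this, Filter.limsup_const]
    have := rho_nonneg A h1
    have := rho_nonneg A h2
    nlinarith [mul_nonneg ha (rho_nonneg A h1), mul_nonneg hb (rho_nonneg A h2)]
  · -- σ > 0
    set c1 := σ1 / σ with hc1
    set c2 := σ2 / σ with hc2
    have hσne : σ ≠ 0 := ne_of_gt hσpos
    have hc1n : 0 ≤ c1 := div_nonneg h1 hσ
    have hc2n : 0 ≤ c2 := div_nonneg h2 hσ
    have hcomb : a * c1 + b * c2 = 1 := by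
      rw [hc1, hc2, mul_div_assoc', mul_div_assoc', ← add_div, ← hσdef, div_self hσne]
    -- the two rescaled nets
    have hball1 : NetInBall (N.smul c1) σ1 := by
      intro i
      have : ‖c1 • N.toFun i‖ = c1 * ‖N.toFun i‖ := by
        rw [norm_smul, Real.norm_of_nonneg hc1n]
      show ‖c1 • N.toFun i‖ ≤ σ1
      rw [this]
      calc c1 * ‖N.toFun i‖ ≤ c1 * σ := mul_le_mul_of_nonneg_left (hball i) hc1n
        _ = σ1 := by rw [hc1, div_mul_cancel₀ σ1 hσne]
    have hball2 : NetInBall (N.smul c2) σ2 := by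
      intro i
      have : ‖c2 • N.toFun i‖ = c2 * ‖N.toFun i‖ := by
        rw [norm_smul, Real.norm_of_nonneg hc2n]
      show ‖c2 • N.toFun i‖ ≤ σ2
      rw [this]
      calc c2 * ‖N.toFun i‖ ≤ c2 * σ := mul_le_mul_of_nonneg_left (hball i) hc2n
        _ = σ2 := by rw [hc2, div_mul_cancel₀ σ2 hσne]
    set f1 : N.ι → ℝ := fun i => ‖y + A (c1 • N.toFun i)‖ with hf1
    set f2 : N.ι → ℝ := fun i => ‖y + A (c2 • N.toFun i)‖ with hf2
    set L1 := Filter.limsup f1 N.F with hL1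
    set L2 := Filter.limsup f2 N.F with hL2
    have hL1mem : L1 - 1 ∈ rhoSet A σ1 :=
      ⟨N.smul c1, y, hy, hball1, Net.smul_weaklyNull hwn c1, rfl⟩
    have hL2mem : L2 - 1 ∈ rhoSet A σ2 :=
      ⟨N.smul c2, y, hy, hball2, Net.smul_weaklyNull hwn c2, rfl⟩
    have hL1le : L1 - 1 ≤ rho A σ1 := by
      rw [rho_eq A hA]; exact le_csSup (rhoSet_bddAbove A σ1) hL1mem
    have hL2le : L2 - 1 ≤ rho A σ2 := by
      rw [rho_eq A hA]; exact le_csSup (rhoSet_bddAbove A σ2) hL2mem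
    -- boundedness facts
    have hb1 : Filter.IsBoundedUnder (· ≤ ·) N.F f1 :=
      Filter.isBoundedUnder_of ⟨1 + ‖A‖ * σ1, fun i =>
        (norm_add_le _ _).trans (add_le_add hy ((A.le_opNorm _).trans
          (mul_le_mul_of_nonneg_left (hball1 i) (norm_nonneg A))))⟩
    have hb2 : Filter.IsBoundedUnder (· ≤ ·) N.F f2 :=
      Filter.isBoundedUnder_of ⟨1 + ‖A‖ * σ2, fun i =>
        (norm_add_le _ _).trans (add_le_add hy ((A.le_opNorm _).trans
          (mul_le_mul_of_nonneg_left (hball2 i) (norm_nonneg A))))⟩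
    have hcob : Filter.IsCoboundedUnder (· ≤ ·) N.F (fun i => ‖y + A (N.toFun i)‖) :=
      (Filter.isBoundedUnder_of ⟨0, fun i => norm_nonneg _⟩ :
        Filter.IsBoundedUnder (· ≥ ·) N.F _).isCoboundedUnder_le
    -- pointwise decomposition
    have hpoint : ∀ i, ‖y + A (N.toFun i)‖ ≤ a * f1 i + b * f2 i := by
      intro i
      have hdecomp : y + A (N.toFun i) =
          a • (y + A (c1 • N.toFun i)) + b • (y + A (c2 • N.toFun i)) := by
        rw [map_smul, map_smul]
        set s := A (N.toFun i)
        have : a • (y + c1 • s) + b • (y + c2 • s) = (a + b) • y + (a * c1 + b * c2) • s := by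
          module
        rw [this, hab, hcomb, one_smul, one_smul]
      rw [hdecomp]
      calc ‖a • (y + A (c1 • N.toFun i)) + b • (y + A (c2 • N.toFun i))‖
          ≤ ‖a • (y + A (c1 • N.toFun i))‖ + ‖b • (y + A (c2 • N.toFun i))‖ := norm_add_le _ _
        _ = a * f1 i + b * f2 i := by
            rw [norm_smul, norm_smul, Real.norm_of_nonneg ha, Real.norm_of_nonneg hb]
    -- limsup estimate
    have hkey : Filter.limsup (fun i => ‖y + A (N.toFun i)‖) N.F ≤ a * L1 + b * L2 := by
      refine le_of_forall_pos_le_add fun ε hε => ?_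
      have he1 : ∀ᶠ i in N.F, f1 i < L1 + ε :=
        Filter.eventually_lt_of_limsup_lt (lt_add_of_pos_right L1 hε) hb1
      have he2 : ∀ᶠ i in N.F, f2 i < L2 + ε :=
        Filter.eventually_lt_of_limsup_lt (lt_add_of_pos_right L2 hε) hb2
      refine Filter.limsup_le_of_le hcob ?_
      filter_upwards [he1, he2] with i hi1 hi2
      have h1' : a * f1 i ≤ a * (L1 + ε) := mul_le_mul_of_nonneg_left hi1.le ha
      have h2' : b * f2 i ≤ b * (L2 + ε) := mul_le_mul_of_nonneg_left hi2.le hb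
      have := hpoint i
      nlinarith [hab]
    have e1 : a * (L1 - 1) ≤ a * rho A σ1 := mul_le_mul_of_nonneg_left hL1le ha
    have e2 : b * (L2 - 1) ≤ b * rho A σ2 := mul_le_mul_of_nonneg_left hL2le hb
    nlinarith

theorem rho_convexOn' (A : X →L[ℝ] Y) : ConvexOn ℝ (Set.Ici (0 : ℝ)) (rho A) := by
  by_cases hA : A = 0
  · have h : rho A = fun _ => (0 : ℝ) := funext fun σ => by simp [rho, hA]
    rw [h]
    exact convexOn_const 0 (convex_Ici 0)
  · exact rho_convexOn A hA

/-- The modulus `ρ(·, A)` is convex on `[0, ∞)`, and consequently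
`lim_{σ → 0⁺} ρ(σ, A)/σ = inf_{σ > 0} ρ(σ, A)/σ`. -/
theorem rho_convexOn_and_tendsto [CompleteSpace X] [CompleteSpace Y]
    (A : X →L[ℝ] Y) :
    ConvexOn ℝ (Set.Ici (0 : ℝ)) (rho A) ∧
      Tendsto (fun σ => rho A σ / σ) (nhdsWithin 0 (Set.Ioi (0 : ℝ)))
        (nhds (sInf {r : ℝ | ∃ σ : ℝ, 0 < σ ∧ r = rho A σ / σ})) := by
  have hconv := rho_convexOn' A
  refine ⟨hconv, ?_⟩
  have h0 := rho_zero A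
  have hmono : MonotoneOn (fun σ => rho A σ / σ) (Set.Ioi (0 : ℝ)) := by
    intro x hx y hy hxy
    have := hconv.secant_mono (a := 0) Set.self_mem_Ici (Set.mem_Ici.2 (le_of_lt hx)) (Set.mem_Ici.2 (le_of_lt hy))
      (ne_of_gt hx) (ne_of_gt hy) hxy
    simpa [h0] using this
  have hbdd : BddBelow ((fun σ => rho A σ / σ) '' Set.Ioi 0) := by
    refine ⟨0, ?_⟩
    rintro r ⟨σ, hσ, rfl⟩
    exact div_nonneg (rho_nonneg A (le_of_lt hσ)) (le_of_lt hσ)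
  have hset : {r : ℝ | ∃ σ : ℝ, 0 < σ ∧ r = rho A σ / σ} =
      (fun σ => rho A σ / σ) '' Set.Ioi 0 := by
    ext r
    constructor
    · rintro ⟨σ, hσ, rfl⟩; exact ⟨σ, hσ, rfl⟩
    · rintro ⟨σ, hσ, rfl⟩; exact ⟨σ, hσ, rfl⟩
  rw [hset]
  exact hmono.tendsto_nhdsGT hbdd
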